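/- Fix an integer n ≥ 1 and a real number N > 0. Let Ω := {z ∈ ℂⁿ : 0 < |z₁| < 1 and |z_k| < 1 for 2 ≤ k ≤ n}, and define χ(z) := −N·( log(−log |z₁|²) + Σ_{k=2}^n log(1 − |z_k|²) ). Let Q ∈ ℂ^{n−1} satisfy |Q_k| < 1 for all k, and set Q' := (0, Q) ∈ ℂⁿ. Then the Lelong number of χ at Q' is zero, i.e. liminf_{z → Q', z ∈ Ω} χ(z) / log ‖z − Q'‖ = 0. -/

import Mathlib

open Filter Real Set

theorem poincare_potential_lelong_zero (n : ℕ) (hn : 0 < n) (N : ℝ) (hN : 0 < N)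
    (Ω : Set (EuclideanSpace ℂ (Fin n)))
    (hΩ : Ω = {z : EuclideanSpace ℂ (Fin n) |
      0 < ‖z ⟨0, hn⟩‖ ∧ ∀ k, ‖z k‖ < 1})
    (χ : EuclideanSpace ℂ (Fin n) → ℝ)
    (hχ : ∀ z, χ z =
      -N * (Real.log (-Real.log (‖z ⟨0, hn⟩‖ ^ 2)) +
        ∑ k ∈ Finset.univ \ {(⟨0, hn⟩ : Fin n)},
          Real.log (1 - ‖z k‖ ^ 2)))
    (Q' : EuclideanSpace ℂ (Fin n))
    (hQ0 : Q' ⟨0, hn⟩ = 0)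
    (hQ : ∀ k, ‖Q' k‖ < 1) :
    Filter.liminf (fun z : EuclideanSpace ℂ (Fin n) =>
      χ z / Real.log ‖z - Q'‖) (nhdsWithin Q' Ω) = 0 := by
  set e0 : Fin n := ⟨0, hn⟩ with he0
  set f : EuclideanSpace ℂ (Fin n) → ℝ := fun z => χ z / Real.log ‖z - Q'‖ with hfdef
  set F := nhdsWithin Q' Ω with hFdef
  set B : ℝ := ∑ k ∈ Finset.univ \ {e0}, Real.log (1 - ‖Q' k‖ ^ 2) with hBdef
  set γ : ℝ → EuclideanSpace ℂ (Fin n) := fun t => Q' + EuclideanSpace.single e0 (t : ℂ)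
    with hγdef
  set L := nhdsWithin (0 : ℝ) (Set.Ioo 0 (1/2)) with hLdef
  have hL : L.NeBot := by
    rw [hLdef, ← mem_closure_iff_nhdsWithin_neBot, closure_Ioo (by norm_num : (0:ℝ) ≠ 1/2)]
    constructor <;> norm_num
  -- facts about γ
  have hγsub : ∀ t : ℝ, γ t - Q' = EuclideanSpace.single e0 (t : ℂ) := fun t => by
    simp [hγdef]
  have hγnorm : ∀ t : ℝ, ‖γ t - Q'‖ = |t| := fun t => by
    rw [hγsub, EuclideanSpace.norm_single, Complex.norm_real, Real.norm_eq_abs]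
  have hγ0 : ∀ t : ℝ, γ t e0 = (t : ℂ) := fun t => by
    simp [hγdef, EuclideanSpace.single_apply, hQ0]
  have hγk : ∀ (t : ℝ) (k : Fin n), k ≠ e0 → γ t k = Q' k := fun t k hk => by
    simp [hγdef, EuclideanSpace.single_apply, hk]
  have hmem : ∀ t ∈ Set.Ioo (0:ℝ) (1/2), γ t ∈ Ω := by
    intro t ht
    rw [hΩ]
    refine ⟨by rw [hγ0, Complex.norm_real, Real.norm_eq_abs, abs_of_pos ht.1]; exact ht.1, fun k => ?_⟩
    rcases eq_or_ne k e0 with rfl | hk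
    · rw [hγ0, Complex.norm_real, Real.norm_eq_abs, abs_of_pos ht.1]; linarith [ht.2]
    · rw [hγk t k hk]; exact hQ k
  have hγtendsto : Tendsto γ L F := by
    rw [hFdef, tendsto_nhdsWithin_iff]
    constructor
    · rw [tendsto_iff_dist_tendsto_zero]
      have : Tendsto (fun t : ℝ => |t|) L (nhds 0) := by
        simpa using (continuous_abs.tendsto (0:ℝ)).mono_left nhdsWithin_le_nhds
      refine this.congr fun t => ?_
      rw [dist_eq_norm, hγnorm]
    · exact eventually_mem_of_tendsto_nhdsWithin (tendsto_id) |>.mono (fun t ht => hmem t ht) |>.filter_mono le_rfl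
  -- the limit along γ
  have hh : Tendsto (fun x : ℝ => N * (Real.log 2 + Real.log x + B) / x) atTop (nhds 0) := by
    have h1 : Tendsto (fun x : ℝ => N * (Real.log 2 + B) / x) atTop (nhds 0) :=
      tendsto_const_nhds.div_atTop tendsto_id
    have h2 : Tendsto (fun x : ℝ => N * (Real.log x / x)) atTop (nhds 0) := by
      have h3 := Real.tendsto_pow_log_div_mul_add_atTop 1 0 1 one_ne_zero
      simp only [pow_one, one_mul, add_zero] at h3
      simpa using h3.const_mul N
    have := h1.add h2
    rw [add_zero] at this
    refine this.congr' ?_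
    filter_upwards [eventually_gt_atTop (0:ℝ)] with x hx
    field_simp
    ring
  have hneg : Tendsto (fun t : ℝ => -Real.log t) L atTop :=
    tendsto_neg_atBot_atTop.comp (Real.tendsto_log_nhdsGT_zero.mono_left
      (nhdsWithin_mono _ Set.Ioo_subset_Ioi_self))
  have hflim : Tendsto (fun t => f (γ t)) L (nhds 0) := by
    refine (hh.comp hneg).congr' ?_
    filter_upwards [self_mem_nhdsWithin] with t ht
    have ht0 : (0:ℝ) < t := ht.1
    have ht1 : t < 1 := by linarith [ht.2]
    have hlt : Real.log t < 0 := Real.log_neg ht0 ht1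
    have hx : (0:ℝ) < -Real.log t := by linarith
    have habs : ‖γ t e0‖ = t := by
      rw [hγ0, Complex.norm_real, Real.norm_eq_abs, abs_of_pos ht0]
    have hsum : ∑ k ∈ Finset.univ \ {e0}, Real.log (1 - ‖γ t k‖ ^ 2) = B := by
      refine Finset.sum_congr rfl fun k hk => ?_
      rw [hγk t k (by simpa using (Finset.mem_sdiff.1 hk).2)]
    have hlogsq : -Real.log (t ^ 2) = 2 * (-Real.log t) := by
      rw [Real.log_pow]; push_cast; ring
    have hlog2 : Real.log (-Real.log (t ^ 2)) = Real.log 2 + Real.log (-Real.log t) := by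
      rw [hlogsq, Real.log_mul two_ne_zero (ne_of_gt hx)]
    show N * (Real.log 2 + Real.log (-Real.log t) + B) / (-Real.log t) = f (γ t)
    rw [hfdef]
    simp only []
    rw [hχ (γ t), habs, hsum, hγnorm, abs_of_pos ht0, hlog2]
    rw [eq_div_iff (ne_of_lt hlt)]
    field_simp
    rw [mul_div_cancel_left₀ _ (ne_of_lt hlt)]
  -- eventual nonnegativity on F
  have hQ'mem : ∀ᶠ z in F, z ∈ Ω := self_mem_nhdsWithin
  have habsF : Tendsto (fun z : EuclideanSpace ℂ (Fin n) => ‖z e0‖) F (nhds 0) := by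
    have hc : Continuous fun z : EuclideanSpace ℂ (Fin n) => ‖z e0‖ :=
      continuous_norm.comp (EuclideanSpace.proj e0).continuous
    have := (hc.tendsto Q').mono_left (nhdsWithin_le_nhds (s := Ω))
    rwa [hQ0, norm_zero] at this
  have hsqF : Tendsto (fun z : EuclideanSpace ℂ (Fin n) => ‖z e0‖ ^ 2) F
      (nhdsWithin 0 (Set.Ioi 0)) := by
    rw [tendsto_nhdsWithin_iff]
    constructor
    · simpa using habsF.pow 2
    · filter_upwards [hQ'mem] with z hz
      rw [hΩ] at hz
      exact pow_pos hz.1 2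
  have hA : Tendsto (fun z : EuclideanSpace ℂ (Fin n) =>
      Real.log (-Real.log (‖z e0‖ ^ 2))) F atTop :=
    Real.tendsto_log_atTop.comp
      (tendsto_neg_atBot_atTop.comp (Real.tendsto_log_nhdsGT_zero.comp hsqF))
  have hS : Tendsto (fun z : EuclideanSpace ℂ (Fin n) =>
      ∑ k ∈ Finset.univ \ {e0}, Real.log (1 - ‖z k‖ ^ 2)) F (nhds B) := by
    rw [hBdef]
    refine tendsto_finset_sum _ fun k _ => ?_
    have hk1 : (0:ℝ) < 1 - ‖Q' k‖ ^ 2 := by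
      have := hQ k
      nlinarith [norm_nonneg (Q' k)]
    have hc : Tendsto (fun z : EuclideanSpace ℂ (Fin n) => 1 - ‖z k‖ ^ 2) F
        (nhds (1 - ‖Q' k‖ ^ 2)) := by
      have hc2 : Continuous fun z : EuclideanSpace ℂ (Fin n) => 1 - ‖z k‖ ^ 2 :=
        continuous_const.sub ((continuous_norm.comp (EuclideanSpace.proj k).continuous).pow 2)
      exact (hc2.tendsto Q').mono_left nhdsWithin_le_nhds
    exact (Real.continuousAt_log (ne_of_gt hk1)).tendsto.comp hc
  have hAev : ∀ᶠ z in F, 1 - B ≤ Real.log (-Real.log (‖z e0‖ ^ 2)) :=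
    hA.eventually_ge_atTop (1 - B)
  have hSev : ∀ᶠ z in F, B - 1 ≤ ∑ k ∈ Finset.univ \ {e0},
      Real.log (1 - ‖z k‖ ^ 2) :=
    hS.eventually_const_le (by linarith)
  have hnormev : ∀ᶠ z in F, ‖z - Q'‖ < 1 := by
    refine Filter.Eventually.filter_mono nhdsWithin_le_nhds ?_
    filter_upwards [Metric.ball_mem_nhds Q' one_pos] with z hz
    rwa [Metric.mem_ball, dist_eq_norm] at hz
  have hposev : ∀ᶠ z in F, 0 < ‖z - Q'‖ := by
    filter_upwards [hQ'mem] with z hz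
    rw [hΩ] at hz
    rw [norm_pos_iff, sub_ne_zero]
    intro h
    rw [h] at hz
    have := hz.1
    rw [hQ0] at this
    simpa using this
  have hnonneg : ∀ᶠ z in F, 0 ≤ f z := by
    filter_upwards [hAev, hSev, hnormev, hposev] with z h1 h2 h3 h4
    rw [hfdef]
    refine div_nonneg_of_nonpos ?_ (Real.log_neg h4 h3).le
    rw [hχ z]
    have : 0 ≤ Real.log (-Real.log (‖z e0‖ ^ 2)) +
        ∑ k ∈ Finset.univ \ {e0}, Real.log (1 - ‖z k‖ ^ 2) := by linarith
    nlinarith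
  -- assemble
  haveI : (Filter.map γ L).NeBot := hL.map γ
  have hGle : Filter.map γ L ≤ F := hγtendsto
  have hflimG : Tendsto f (Filter.map γ L) (nhds 0) := by
    rw [tendsto_map'_iff]; exact hflim
  have hbddF : F.IsBoundedUnder (· ≥ ·) f := ⟨0, hnonneg⟩
  have hcobG : (Filter.map γ L).IsCoboundedUnder (· ≥ ·) f :=
    hflimG.isBoundedUnder_le.isCoboundedUnder_ge
  have hcobF : F.IsCoboundedUnder (· ≥ ·) f :=
    Filter.IsCobounded.mono (map_mono hGle) hcobG
  have h1 : liminf f F ≤ liminf f (Filter.map γ L) :=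
    liminf_le_liminf_of_le hGle hbddF hcobG
  have h2 : liminf f (Filter.map γ L) = 0 := hflimG.liminf_eq
  have h3 : (0:ℝ) ≤ liminf f F := le_liminf_of_le hcobF hnonneg
  have h4 : liminf f F ≤ 0 := by rw [← h2]; exact h1
  linarith
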